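/- Let H be a finite additive abelian group of order n and S a nonempty subset of H. Define n* = (n/|S|) · max{|Σ_{s ∈ S} χ(s)| : χ is a nontrivial additive character of H}. If X and Y are subsets of H with sqrt(|X|·|Y|) > n*, then there exist x ∈ X and y ∈ Y with y - x ∈ S. -/

import Mathlib

open Finset Complex


lemma parseval_aux (H : Type*) [AddCommGroup H] [Fintype H] [DecidableEq H] (A : Finset H) :
    ∑ χ : AddChar H ℂ, ‖∑ a ∈ A, χ a‖ ^ 2
      = (Fintype.card H : ℝ) * A.card := by
  classical
  have hC : ∑ χ : AddChar H ℂ, ((‖∑ a ∈ A, χ a‖ ^ 2 : ℝ) : ℂ)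
      = ((Fintype.card H : ℝ) * A.card : ℂ) := by
    have h1 : ∀ χ : AddChar H ℂ, ((‖∑ a ∈ A, χ a‖ ^ 2 : ℝ) : ℂ)
        = ∑ a ∈ A, ∑ b ∈ A, χ (a + -b) := by
      intro χ
      rw [Complex.sq_norm, ← Complex.mul_conj]
      rw [map_sum, Finset.sum_mul_sum]
      refine Finset.sum_congr rfl fun a _ => Finset.sum_congr rfl fun b _ => ?_
      rw [AddChar.map_add_eq_mul, AddChar.map_neg_eq_conj]
    simp_rw [h1]
    rw [Finset.sum_comm]
    have h2 : ∀ a ∈ A, (∑ b ∈ A, ∑ χ : AddChar H ℂ, χ (a + -b))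
        = (Fintype.card H : ℂ) := by
      intro a ha
      have h3 : ∀ b : H, ∑ χ : AddChar H ℂ, χ (a + -b)
          = if a = b then (Fintype.card H : ℂ) else 0 := by
        intro b
        rw [AddChar.sum_apply_eq_ite]
        congr 1
        rw [eq_iff_iff, ← sub_eq_zero (a := a) (b := b), sub_eq_add_neg]
      simp_rw [h3]
      rw [Finset.sum_ite_eq A a (fun _ => (Fintype.card H : ℂ))]
      simp [ha]
    have h4 : ∀ a ∈ A, (∑ b ∈ A, ∑ χ : AddChar H ℂ, χ (a + -b)) = ∑ χ : AddChar H ℂ, ∑ b ∈ A, χ (a + -b) := fun a _ => Finset.sum_comm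
    rw [Finset.sum_congr rfl fun a ha => (h4 a ha).symm.trans (h2 a ha)]
    rw [Finset.sum_const, nsmul_eq_mul]
    push_cast
    ring
  have := hC
  rw [← Complex.ofReal_sum] at this
  exact_mod_cast this


/-- Spectral Gap Theorem for Cayley digraphs: for a finite additive abelian group `H` of
order `n` and a nonempty subset `S ⊆ H`, set
`n* = (n/|S|) · max{|∑_{s ∈ S} χ s| : χ a nontrivial additive character of H}`.
If `X, Y ⊆ H` satisfy `√(|X|·|Y|) > n*`, then there exist `x ∈ X` and `y ∈ Y` with
`y - x ∈ S`. -/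
theorem spectral_gap_cayley (H : Type*) [AddCommGroup H] [Fintype H] [DecidableEq H]
    (S : Finset H) (hS : S.Nonempty)
    (nstar : ℝ)
    (hnstar : nstar = ((Fintype.card H : ℝ) / (S.card : ℝ)) *
      (⨆ χ : {χ : AddChar H ℂ // χ ≠ 1}, ‖∑ s ∈ S, (χ : AddChar H ℂ) s‖))
    (X Y : Finset H)
    (h : Real.sqrt ((X.card : ℝ) * (Y.card : ℝ)) > nstar) :
    ∃ x ∈ X, ∃ y ∈ Y, y - x ∈ S := by
  classical
  set n := Fintype.card H with hn
  set T : Finset (H × H) := (X ×ˢ Y).filter (fun p => p.2 - p.1 ∈ S) with hT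
  suffices hTne : T.Nonempty by
    obtain ⟨⟨x, y⟩, hxy⟩ := hTne
    rw [hT, Finset.mem_filter, Finset.mem_product] at hxy
    exact ⟨x, hxy.1.1, y, hxy.1.2, hxy.2⟩
  by_contra hTe
  rw [Finset.not_nonempty_iff_eq_empty] at hTe
  set M : ℝ := ⨆ χ : {χ : AddChar H ℂ // χ ≠ 1},
      ‖∑ s ∈ S, (χ : AddChar H ℂ) s‖ with hM
  have hbdd : BddAbove (Set.range fun χ : {χ : AddChar H ℂ // χ ≠ 1} =>
      ‖∑ s ∈ S, (χ : AddChar H ℂ) s‖) :=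
    Set.Finite.bddAbove (Set.finite_range _)
  set F : AddChar H ℂ → ℂ := fun χ =>
    (∑ x ∈ X, χ (-x)) * ((∑ y ∈ Y, χ y) * (∑ s ∈ S, χ (-s))) with hF
  -- main identity
  have main : ∑ χ : AddChar H ℂ, F χ = 0 := by
    have e1 : ∀ χ : AddChar H ℂ, F χ
        = ∑ x ∈ X, ∑ y ∈ Y, ∑ s ∈ S, χ (-x + (y + -s)) := by
      intro χ
      rw [hF]
      simp only [Finset.sum_mul, Finset.mul_sum, AddChar.map_add_eq_mul]
      calc ∑ s ∈ S, ∑ y ∈ Y, ∑ x ∈ X, χ (-x) * (χ y * χ (-s))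
          = ∑ y ∈ Y, ∑ s ∈ S, ∑ x ∈ X, χ (-x) * (χ y * χ (-s)) := Finset.sum_comm
        _ = ∑ y ∈ Y, ∑ x ∈ X, ∑ s ∈ S, χ (-x) * (χ y * χ (-s)) :=
            Finset.sum_congr rfl fun _ _ => Finset.sum_comm
        _ = ∑ x ∈ X, ∑ y ∈ Y, ∑ s ∈ S, χ (-x) * (χ y * χ (-s)) := Finset.sum_comm
    have step1 : ∑ χ : AddChar H ℂ, F χ
        = ∑ x ∈ X, ∑ y ∈ Y, ∑ s ∈ S, ∑ χ : AddChar H ℂ, χ (-x + (y + -s)) := by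
      simp_rw [e1]
      calc ∑ χ : AddChar H ℂ, ∑ x ∈ X, ∑ y ∈ Y, ∑ s ∈ S, χ (-x + (y + -s))
          = ∑ x ∈ X, ∑ χ : AddChar H ℂ, ∑ y ∈ Y, ∑ s ∈ S, χ (-x + (y + -s)) :=
            Finset.sum_comm
        _ = ∑ x ∈ X, ∑ y ∈ Y, ∑ χ : AddChar H ℂ, ∑ s ∈ S, χ (-x + (y + -s)) :=
            Finset.sum_congr rfl fun x _ => Finset.sum_comm
        _ = ∑ x ∈ X, ∑ y ∈ Y, ∑ s ∈ S, ∑ χ : AddChar H ℂ, χ (-x + (y + -s)) :=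
            Finset.sum_congr rfl fun x _ => Finset.sum_congr rfl fun y _ => Finset.sum_comm
    rw [step1]
    have step2 : ∀ x ∈ X, ∀ y ∈ Y,
        (∑ s ∈ S, ∑ χ : AddChar H ℂ, χ (-x + (y + -s)))
        = if y - x ∈ S then (n : ℂ) else 0 := by
      intro x _ y _
      have e2 : ∀ s : H, ∑ χ : AddChar H ℂ, χ (-x + (y + -s))
          = if y - x = s then (n : ℂ) else 0 := by
        intro s
        rw [AddChar.sum_apply_eq_ite]
        congr 1
        rw [eq_iff_iff, ← sub_eq_zero (a := y - x) (b := s)]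
        constructor <;> intro hh <;> [rw [← hh]; rw [← hh]] <;> abel
      simp_rw [e2]
      exact Finset.sum_ite_eq S (y - x) (fun _ => (n : ℂ))
    calc ∑ x ∈ X, ∑ y ∈ Y, ∑ s ∈ S, ∑ χ : AddChar H ℂ, χ (-x + (y + -s))
        = ∑ x ∈ X, ∑ y ∈ Y, (if y - x ∈ S then (n : ℂ) else 0) :=
          Finset.sum_congr rfl fun x hx => Finset.sum_congr rfl fun y hy => step2 x hx y hy
      _ = ∑ p ∈ X ×ˢ Y, (if p.2 - p.1 ∈ S then (n : ℂ) else 0) := by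
          rw [Finset.sum_product]
      _ = ∑ p ∈ T, (n : ℂ) := by rw [hT, Finset.sum_filter]
      _ = 0 := by rw [hTe]; simp
  -- split off trivial character
  have split : F 1 + ∑ χ ∈ Finset.univ.erase (1 : AddChar H ℂ), F χ = 0 := by
    rw [Finset.add_sum_erase Finset.univ F (Finset.mem_univ 1)]
    exact main
  have hF1 : F 1 = ((X.card : ℂ) * ((Y.card : ℂ) * (S.card : ℂ))) := by
    rw [hF]; simp
  have hE : ∑ χ ∈ Finset.univ.erase (1 : AddChar H ℂ), F χ
      = -((X.card : ℂ) * ((Y.card : ℂ) * (S.card : ℂ))) := by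
    linear_combination split - hF1
  have habs : (X.card : ℝ) * ((Y.card : ℝ) * (S.card : ℝ))
      = ‖∑ χ ∈ Finset.univ.erase (1 : AddChar H ℂ), F χ‖ := by
    rw [hE]
    simp [norm_mul, Complex.norm_natCast]
  -- bounding part
  set FA : AddChar H ℂ → ℝ := fun χ => ‖∑ x ∈ X, χ x‖ with hFA
  set FB : AddChar H ℂ → ℝ := fun χ => ‖∑ y ∈ Y, χ y‖ with hFB
  have hM0 : 0 ≤ M := by
    rcases isEmpty_or_nonempty {χ : AddChar H ℂ // χ ≠ 1} with hE' | hNE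
    · rw [hM, Real.iSup_of_isEmpty]
    · obtain ⟨χ⟩ := hNE
      exact le_trans (norm_nonneg _) (le_ciSup hbdd χ)
  have hpt : ∀ χ ∈ Finset.univ.erase (1 : AddChar H ℂ),
      ‖F χ‖ ≤ M * (FA χ * FB χ) := by
    intro χ hχ
    have hχ1 : χ ≠ 1 := (Finset.mem_erase.mp hχ).1
    have hconjX : ∑ x ∈ X, χ (-x) = (starRingEnd ℂ) (∑ x ∈ X, χ x) := by
      rw [map_sum]
      exact Finset.sum_congr rfl fun x _ => AddChar.map_neg_eq_conj χ x
    have hconjS : ∑ s ∈ S, χ (-s) = (starRingEnd ℂ) (∑ s ∈ S, χ s) := by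
      rw [map_sum]
      exact Finset.sum_congr rfl fun s _ => AddChar.map_neg_eq_conj χ s
    have hA : ‖∑ x ∈ X, χ (-x)‖ = FA χ := by
      rw [hconjX, Complex.norm_conj]
    have hC : ‖∑ s ∈ S, χ (-s)‖ ≤ M := by
      rw [hconjS, Complex.norm_conj]
      exact le_ciSup hbdd ⟨χ, hχ1⟩
    have expand : ‖F χ‖
        = FA χ * (FB χ * ‖∑ s ∈ S, χ (-s)‖) := by
      rw [hF]
      simp only [norm_mul]
      rw [hA]
    rw [expand]
    have h1 : 0 ≤ FA χ := norm_nonneg _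
    have h2 : 0 ≤ FB χ := norm_nonneg _
    calc FA χ * (FB χ * ‖∑ s ∈ S, χ (-s)‖)
        = (FA χ * FB χ) * ‖∑ s ∈ S, χ (-s)‖ := by ring
      _ ≤ (FA χ * FB χ) * M := mul_le_mul_of_nonneg_left hC (mul_nonneg h1 h2)
      _ = M * (FA χ * FB χ) := by ring
  have tri : ‖∑ χ ∈ Finset.univ.erase (1 : AddChar H ℂ), F χ‖
      ≤ ∑ χ ∈ Finset.univ.erase (1 : AddChar H ℂ), ‖F χ‖ :=
    norm_sum_le _ _
  have sum_le : ∑ χ ∈ Finset.univ.erase (1 : AddChar H ℂ), ‖F χ‖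
      ≤ M * ∑ χ ∈ Finset.univ.erase (1 : AddChar H ℂ), FA χ * FB χ := by
    rw [Finset.mul_sum]
    exact Finset.sum_le_sum hpt
  have hsub : ∑ χ ∈ Finset.univ.erase (1 : AddChar H ℂ), FA χ * FB χ
      ≤ ∑ χ : AddChar H ℂ, FA χ * FB χ :=
    Finset.sum_le_sum_of_subset_of_nonneg (Finset.erase_subset _ _)
      (fun χ _ _ => mul_nonneg (norm_nonneg _) (norm_nonneg _))
  have parX := parseval_aux H X
  have parY := parseval_aux H Y
  have CS : (∑ χ : AddChar H ℂ, FA χ * FB χ) ^ 2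
      ≤ ((n : ℝ) * X.card) * ((n : ℝ) * Y.card) := by
    calc (∑ χ : AddChar H ℂ, FA χ * FB χ) ^ 2
        ≤ (∑ χ : AddChar H ℂ, FA χ ^ 2) * ∑ χ : AddChar H ℂ, FB χ ^ 2 :=
          Finset.sum_mul_sq_le_sq_mul_sq Finset.univ FA FB
      _ = ((n : ℝ) * X.card) * ((n : ℝ) * Y.card) := by rw [hFA, hFB, parX, parY]
  have hsum0 : 0 ≤ ∑ χ : AddChar H ℂ, FA χ * FB χ :=
    Finset.sum_nonneg fun χ _ =>
      mul_nonneg (norm_nonneg _) (norm_nonneg _)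
  have CS' : ∑ χ : AddChar H ℂ, FA χ * FB χ
      ≤ (n : ℝ) * Real.sqrt ((X.card : ℝ) * Y.card) := by
    calc ∑ χ : AddChar H ℂ, FA χ * FB χ
        = Real.sqrt ((∑ χ : AddChar H ℂ, FA χ * FB χ) ^ 2) := (Real.sqrt_sq hsum0).symm
      _ ≤ Real.sqrt (((n : ℝ) * X.card) * ((n : ℝ) * Y.card)) := Real.sqrt_le_sqrt CS
      _ = (n : ℝ) * Real.sqrt ((X.card : ℝ) * Y.card) := by
          rw [show ((n : ℝ) * X.card) * ((n : ℝ) * Y.card)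
              = (n : ℝ) ^ 2 * ((X.card : ℝ) * Y.card) by ring,
            Real.sqrt_mul (sq_nonneg _), Real.sqrt_sq (by positivity)]
  have final : (X.card : ℝ) * ((Y.card : ℝ) * (S.card : ℝ))
      ≤ M * ((n : ℝ) * Real.sqrt ((X.card : ℝ) * Y.card)) := by
    rw [habs]
    calc ‖∑ χ ∈ Finset.univ.erase (1 : AddChar H ℂ), F χ‖
        ≤ M * ∑ χ ∈ Finset.univ.erase (1 : AddChar H ℂ), FA χ * FB χ := le_trans tri sum_le
      _ ≤ M * ∑ χ : AddChar H ℂ, FA χ * FB χ := mul_le_mul_of_nonneg_left hsub hM0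
      _ ≤ M * ((n : ℝ) * Real.sqrt ((X.card : ℝ) * Y.card)) :=
          mul_le_mul_of_nonneg_left CS' hM0
  set σ := Real.sqrt ((X.card : ℝ) * Y.card) with hσ
  have hS0 : (0 : ℝ) < S.card := by exact_mod_cast hS.card_pos
  have hn0 : (0 : ℝ) < n := by exact_mod_cast Fintype.card_pos
  have hns0 : 0 ≤ nstar := by
    rw [hnstar]
    exact mul_nonneg (div_nonneg (by positivity) (by positivity)) hM0
  have hσpos : 0 < σ := lt_of_le_of_lt hns0 h
  have hXY : (X.card : ℝ) * Y.card = σ ^ 2 := (Real.sq_sqrt (by positivity)).symm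
  have hns : nstar * S.card = (n : ℝ) * M := by
    rw [hnstar, mul_right_comm, div_mul_cancel₀ _ hS0.ne']
  nlinarith [final, mul_lt_mul_of_pos_right h (mul_pos hS0 hσpos)]
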